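/- Let (τ_1,...,τ_r) be a minimal transitive star factorization of π ∈ S_n and let σ = (a_1 a_2 ... a_ℓ) be a cycle of π with all a_i ≠ 1. Then there is an index j such that (1 a_j) appears exactly twice among the factors, every (1 a_i) with i ≠ j appears exactly once, and (taking j = 1 without loss of generality) the factors meeting σ appear in right-to-left order (1 a_1), (1 a_2), ..., (1 a_ℓ), (1 a_1). -/

import Mathlib

def IsStarList {n : ℕ} [NeZero n] (l : List (Equiv.Perm (Fin n))) : Prop :=
  ∀ τ ∈ l, ∃ i : Fin n, i ≠ 0 ∧ τ = Equiv.swap 0 i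

def IsStarFactorization {n : ℕ} [NeZero n] (π : Equiv.Perm (Fin n))
    (l : List (Equiv.Perm (Fin n))) : Prop :=
  IsStarList l ∧ l.prod = π

def IsTransitiveList {n : ℕ} (l : List (Equiv.Perm (Fin n))) : Prop :=
  ∀ x y : Fin n, ∃ g ∈ Subgroup.closure {τ | τ ∈ l}, g x = y

/-- Number of cycles of `π`, counting fixed points as cycles. -/
def numCycles {n : ℕ} (π : Equiv.Perm (Fin n)) : ℕ :=
  π.cycleType.card + (Finset.univ.filter fun x => π x = x).card

/-- A minimal transitive star factorization: transitive of length `n + m - 2`. -/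
def IsMinimalTransitiveStarFactorization {n : ℕ} [NeZero n] (π : Equiv.Perm (Fin n))
    (l : List (Equiv.Perm (Fin n))) : Prop :=
  IsStarFactorization π l ∧ IsTransitiveList l ∧ l.length = n + numCycles π - 2

open Equiv Finset

namespace Stmt7

variable {n : ℕ} [NeZero n]

/-- The letter of the `k`-th factor (image of 0 under it). -/
def letter (l : List (Equiv.Perm (Fin n))) (k : ℕ) : Fin n := (l.getD k 1) 0

/-- Suffix product: the state after applying factors `l.length-1, …, k`. -/
def Sfx (l : List (Equiv.Perm (Fin n))) (k : ℕ) : Equiv.Perm (Fin n) := (l.drop k).prod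

/-- Occurrence set of the letter `x`. -/
def occ (l : List (Equiv.Perm (Fin n))) (x : Fin n) : Finset ℕ :=
  (Finset.range l.length).filter (fun k => letter l k = x)

variable {l : List (Equiv.Perm (Fin n))}

lemma get_eq_swap_letter (hsl : IsStarList l) {k : ℕ} (hk : k < l.length) :
    l.getD k 1 = Equiv.swap 0 (letter l k) ∧ letter l k ≠ 0 := by
  have hmem : l.getD k 1 ∈ l := by
    rw [List.getD_eq_get l 1 ⟨k, hk⟩]; exact l.get_mem _
  obtain ⟨i, hi0, hi⟩ := hsl _ hmem
  have hlet : letter l k = i := by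
    rw [letter, hi]; exact Equiv.swap_apply_left 0 i
  rw [hlet]; exact ⟨hi, hi0⟩

lemma letter_ne_zero (hsl : IsStarList l) {k : ℕ} (hk : k < l.length) : letter l k ≠ 0 :=
  (get_eq_swap_letter hsl hk).2

lemma Sfx_zero : Sfx l 0 = l.prod := by simp [Sfx]

lemma Sfx_ge {k : ℕ} (hk : l.length ≤ k) : Sfx l k = 1 := by
  simp [Sfx, List.drop_eq_nil_of_le hk]

lemma Sfx_succ (hsl : IsStarList l) {k : ℕ} (hk : k < l.length) :
    Sfx l k = Equiv.swap 0 (letter l k) * Sfx l (k + 1) := by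
  have : l.drop k = l.get ⟨k, hk⟩ :: l.drop (k + 1) := List.drop_eq_getElem_cons hk
  have hget : l.get ⟨k, hk⟩ = Equiv.swap 0 (letter l k) := by
    rw [← List.getD_eq_get l 1 ⟨k, hk⟩]; exact (get_eq_swap_letter hsl hk).1
  rw [Sfx, this, List.prod_cons, hget]; rfl

lemma mem_occ {x : Fin n} {k : ℕ} : k ∈ occ l x ↔ k < l.length ∧ letter l k = x := by
  simp [occ]

lemma stay (hsl : IsStarList l) (d : ℕ) :
    ∀ (k : ℕ) (x p : Fin n), p ≠ 0 → k + d ≤ l.length → Sfx l (k + d) x = p →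
      (∀ k', k ≤ k' → k' < k + d → letter l k' ≠ p) → Sfx l k x = p := by
  induction d with
  | zero => intro k x p _ _ h _; simpa using h
  | succ d ih =>
    intro k x p hp0 hle h hno
    have hk : k < l.length := by omega
    have hstep : Sfx l (k + 1) x = p := by
      apply ih (k+1) x p hp0 (by omega) (by rw [show k + 1 + d = k + (d+1) by omega]; exact h)
      intro k' h1 h2; exact hno k' (by omega) (by omega)
    rw [Sfx_succ hsl hk, Equiv.Perm.mul_apply, hstep]
    exact Equiv.swap_apply_of_ne_of_ne hp0 (fun he => hno k le_rfl (by omega) he.symm)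

lemma pickup (hsl : IsStarList l) {x : Fin n} (hx : x ≠ 0) (hne : (occ l x).Nonempty) :
    Sfx l ((occ l x).max' hne) x = 0 := by
  set K := (occ l x).max' hne with hK
  have hKm : K ∈ occ l x := (occ l x).max'_mem hne
  obtain ⟨hKlen, hKlet⟩ := mem_occ.mp hKm
  have hstay : Sfx l (K + 1) x = x := by
    apply stay hsl (l.length - (K+1)) (K+1) x x hx (by omega)
    · rw [show K + 1 + (l.length - (K+1)) = l.length by omega, Sfx_ge le_rfl]; rfl
    · intro k' h1 h2 hcon
      have : k' ∈ occ l x := mem_occ.mpr ⟨by omega, hcon⟩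
      have := (occ l x).le_max' k' this
      omega
  rw [Sfx_succ hsl hKlen, Equiv.Perm.mul_apply, hstay, hKlet, Equiv.swap_apply_right]

lemma main_lemma (hsl : IsStarList l) :
    ∀ k, k ≤ l.length → ∀ x : Fin n, Sfx l k x = 0 → l.prod x ≠ 0 →
      ∃ k' < k, letter l k' = l.prod x := by
  intro k
  induction k using Nat.strong_induction_on with
  | _ k ih =>
    intro hk x h0 hπ
    match k, hk with
    | 0, hk => rw [← Sfx_zero, h0] at hπ; exact absurd rfl hπ
    | (k₀+1), hk =>
      have hk₀ : k₀ < l.length := by omega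
      set p := letter l k₀ with hp
      have hp0 : p ≠ 0 := letter_ne_zero hsl hk₀
      have hSk₀ : Sfx l k₀ x = p := by
        rw [Sfx_succ hsl hk₀, Equiv.Perm.mul_apply, h0, Equiv.swap_apply_left]
      set Q := (Finset.range k₀).filter (fun k' => letter l k' = p) with hQ
      by_cases hQne : Q.Nonempty
      · set k₂ := Q.max' hQne with hk₂
        have hk₂m : k₂ ∈ Q := Q.max'_mem hQne
        have hk₂lt : k₂ < k₀ := by simpa [hQ] using (Finset.mem_filter.mp hk₂m).1
        have hk₂let : letter l k₂ = p := (Finset.mem_filter.mp hk₂m).2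
        have hstay : Sfx l (k₂ + 1) x = p := by
          apply stay hsl (k₀ - (k₂+1)) (k₂+1) x p hp0 (by omega)
          · rw [show k₂ + 1 + (k₀ - (k₂+1)) = k₀ by omega]; exact hSk₀
          · intro k' h1 h2 hcon
            have : k' ∈ Q := Finset.mem_filter.mpr ⟨Finset.mem_range.mpr (by omega), hcon⟩
            have := Q.le_max' k' this
            omega
        have h0' : Sfx l k₂ x = 0 := by
          have hk₂len : k₂ < l.length := by omega
          rw [Sfx_succ hsl hk₂len, Equiv.Perm.mul_apply, hstay, hk₂let, Equiv.swap_apply_right]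
        obtain ⟨k', hk', hlet⟩ := ih k₂ (by omega) (by omega) x h0' hπ
        exact ⟨k', by omega, hlet⟩
      · have hstay : Sfx l 0 x = p := by
          apply stay hsl k₀ 0 x p hp0 (by omega)
          · simpa using hSk₀
          · intro k' _ h2 hcon
            exact hQne ⟨k', Finset.mem_filter.mpr ⟨Finset.mem_range.mpr (by omega), hcon⟩⟩
        refine ⟨k₀, by omega, ?_⟩
        rw [← Sfx_zero, hstay]

lemma fact3 (hsl : IsStarList l) {x : Fin n} (hx : x ≠ 0) (hπx : l.prod x ≠ 0)
    (hne : (occ l x).Nonempty) :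
    ∃ k' ∈ occ l (l.prod x), k' < (occ l x).max' hne := by
  have hKm := (occ l x).max'_mem hne
  obtain ⟨hKlen, _⟩ := mem_occ.mp hKm
  obtain ⟨k', hk', hlet⟩ := main_lemma hsl _ (le_of_lt hKlen) x (pickup hsl hx hne) hπx
  exact ⟨k', mem_occ.mpr ⟨by omega, hlet⟩, hk'⟩



lemma count_eq_card_filter {α : Type*} [DecidableEq α] (L : List α) (y d : α) :
    L.count y = ((Finset.range L.length).filter (fun k => L.getD k d = y)).card := by
  induction L with
  | nil => simp
  | cons a t ih =>
    rw [List.count_cons, Finset.card_filter, List.length_cons, Finset.sum_range_succ',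
      List.getD_cons_zero]
    simp only [List.getD_cons_succ]
    rw [← Finset.card_filter, ← ih]
    congr 1
    · by_cases h : a = y <;> simp [h, beq_iff_eq]

lemma count_eq_occ_card (hsl : IsStarList l) {x : Fin n} (hx : x ≠ 0) :
    l.count (Equiv.swap 0 x) = (occ l x).card := by
  rw [count_eq_card_filter l (Equiv.swap 0 x) 1, occ]
  congr 1
  apply Finset.filter_congr
  intro k hk
  have hk' : k < l.length := Finset.mem_range.mp hk
  obtain ⟨hget, _⟩ := get_eq_swap_letter hsl hk'
  rw [hget]
  constructor
  · intro h
    have := congrArg (fun σ : Equiv.Perm (Fin n) => σ 0) h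
    simpa [Equiv.swap_apply_left] using this
  · intro h; rw [h]

lemma occ_nonempty (hsl : IsStarList l) (htr : IsTransitiveList l) {x : Fin n} (hx : x ≠ 0) :
    (occ l x).Nonempty := by
  by_contra hemp
  have hno : ∀ k < l.length, letter l k ≠ x := by
    intro k hk hcon
    exact hemp ⟨k, mem_occ.mpr ⟨hk, hcon⟩⟩
  have hfix : ∀ τ ∈ l, τ x = x := by
    intro τ hτ
    obtain ⟨k, hget⟩ := List.mem_iff_get.mp hτ
    have hk : (k : ℕ) < l.length := k.isLt
    have : τ = Equiv.swap 0 (letter l k) := by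
      rw [← hget, ← List.getD_eq_get l 1 k]
      exact (get_eq_swap_letter hsl hk).1
    rw [this]
    exact Equiv.swap_apply_of_ne_of_ne hx (fun h => hno k hk h.symm)
  obtain ⟨g, hg, hgx⟩ := htr x 0
  have : g x = x := by
    refine Subgroup.closure_induction (p := fun g _ => g x = x) ?_ rfl ?_ ?_ hg
    · intro τ hτ; exact hfix τ hτ
    · intro g₁ g₂ _ _ h1 h2
      simp [Equiv.Perm.mul_apply, h2, h1]
    · intro g₁ _ h1
      conv_lhs => rw [← h1]
      simp
  rw [this] at hgx; exact hx hgx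



section Classes

variable (π : Equiv.Perm (Fin n))

/-- The cycle-class of `x` as a finset. -/
def cls (x : Fin n) : Finset (Fin n) := Finset.univ.filter (π.SameCycle x)

/-- The finset of all cycle-classes. -/
def CLS : Finset (Finset (Fin n)) := Finset.univ.image (cls π)

variable {π}

lemma mem_cls {x y : Fin n} : y ∈ cls π x ↔ π.SameCycle x y := by simp [cls]

lemma cls_eq_of_sameCycle {x y : Fin n} (h : π.SameCycle x y) : cls π x = cls π y := by
  ext z; simp only [mem_cls]
  exact ⟨fun hz => h.symm.trans hz, fun hz => h.trans hz⟩

lemma self_mem_cls {x : Fin n} : x ∈ cls π x := mem_cls.mpr (Equiv.Perm.SameCycle.refl π x)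

lemma cls_mem_CLS (x : Fin n) : cls π x ∈ CLS π :=
  Finset.mem_image_of_mem _ (Finset.mem_univ x)

lemma apply_mem_cls {x y : Fin n} (h : y ∈ cls π x) : π y ∈ cls π x :=
  mem_cls.mpr (Equiv.Perm.sameCycle_apply_right.mpr (mem_cls.mp h))

lemma eq_cls_of_mem {D : Finset (Fin n)} (hD : D ∈ CLS π) {y : Fin n} (hy : y ∈ D) :
    D = cls π y := by
  obtain ⟨x, _, rfl⟩ := Finset.mem_image.mp hD
  exact cls_eq_of_sameCycle (mem_cls.mp hy)

lemma filter_cls_eq {D : Finset (Fin n)} (hD : D ∈ CLS π) :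
    Finset.univ.filter (fun x => cls π x = D) = D := by
  obtain ⟨y, _, rfl⟩ := Finset.mem_image.mp hD
  ext z
  simp only [Finset.mem_filter, Finset.mem_univ, true_and]
  constructor
  · intro h; rw [← h]; exact self_mem_cls
  · intro h; exact (cls_eq_of_sameCycle (mem_cls.mp h)).symm

lemma cls_of_fixed {x : Fin n} (h : π x = x) : cls π x = {x} := by
  ext y
  simp only [mem_cls, Finset.mem_singleton]
  constructor
  · rintro ⟨i, hi⟩
    rw [← hi]
    exact (Equiv.Perm.zpow_apply_eq_self_of_apply_eq_self h i).symm ▸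
      (Equiv.Perm.zpow_apply_eq_self_of_apply_eq_self h i)
  · rintro rfl; exact Equiv.Perm.SameCycle.refl π y
lemma cls_of_moved {x : Fin n} (h : π x ≠ x) : cls π x = (π.cycleOf x).support := by
  ext y
  rw [mem_cls, Equiv.Perm.mem_support_cycleOf_iff]
  simp [Equiv.Perm.mem_support, h]

lemma card_CLS : (CLS π).card = numCycles π := by
  classical
  have hfixmoved : (Finset.univ : Finset (Fin n)) =
      (Finset.univ.filter fun x => π x = x) ∪ (Finset.univ.filter fun x => π x ≠ x) := by
    ext x; by_cases h : π x = x <;> simp [h]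
  have himg : CLS π = ((Finset.univ.filter fun x => π x = x).image (fun x => ({x} : Finset (Fin n))))
      ∪ (π.cycleFactorsFinset.image Equiv.Perm.support) := by
    ext D
    constructor
    · intro hD
      obtain ⟨x, _, rfl⟩ := Finset.mem_image.mp hD
      by_cases h : π x = x
      · exact Finset.mem_union_left _ (Finset.mem_image.mpr
          ⟨x, Finset.mem_filter.mpr ⟨Finset.mem_univ x, h⟩, (cls_of_fixed h).symm⟩)
      · refine Finset.mem_union_right _ (Finset.mem_image.mpr ⟨π.cycleOf x, ?_, ?_⟩)
        · exact Equiv.Perm.cycleOf_mem_cycleFactorsFinset_iff.mpr (Equiv.Perm.mem_support.mpr h)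
        · exact (cls_of_moved h).symm
    · intro hD
      rcases Finset.mem_union.mp hD with hD | hD
      · obtain ⟨x, hx, rfl⟩ := Finset.mem_image.mp hD
        have h := (Finset.mem_filter.mp hx).2
        exact (cls_of_fixed h) ▸ cls_mem_CLS x
      · obtain ⟨f, hf, rfl⟩ := Finset.mem_image.mp hD
        have hcyc : f.IsCycle := (Equiv.Perm.mem_cycleFactorsFinset_iff.mp hf).1
        obtain ⟨y, hy⟩ := hcyc.nonempty_support
        have hfy : f = π.cycleOf y := Equiv.Perm.cycle_is_cycleOf hy hf
        have hymoved : π y ≠ y := by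
          have h1 : f y ≠ y := Equiv.Perm.mem_support.mp hy
          have h2 := (Equiv.Perm.mem_cycleFactorsFinset_iff.mp hf).2 y hy
          rw [← h2]; exact h1
        rw [hfy, ← cls_of_moved hymoved]
        exact cls_mem_CLS y
  rw [himg, numCycles]
  have hdisj : Disjoint ((Finset.univ.filter fun x => π x = x).image (fun x => ({x} : Finset (Fin n))))
      (π.cycleFactorsFinset.image Equiv.Perm.support) := by
    rw [Finset.disjoint_left]
    rintro D hD1 hD2
    obtain ⟨x, hx, rfl⟩ := Finset.mem_image.mp hD1
    obtain ⟨f, hf, hsup⟩ := Finset.mem_image.mp hD2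
    have hxf : x ∈ f.support := by rw [hsup]; exact Finset.mem_singleton_self x
    have h2 := (Equiv.Perm.mem_cycleFactorsFinset_iff.mp hf).2 x hxf
    have := Equiv.Perm.mem_support.mp hxf
    rw [h2] at this
    exact this (Finset.mem_filter.mp hx).2
  rw [Finset.card_union_of_disjoint hdisj]
  have hc1 : ((Finset.univ.filter fun x => π x = x).image (fun x => ({x} : Finset (Fin n)))).card
      = (Finset.univ.filter fun x => π x = x).card := by
    apply Finset.card_image_of_injOn
    intro x _ y _ h
    simpa using h
  have hc2 : (π.cycleFactorsFinset.image Equiv.Perm.support).card = π.cycleType.card := by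
    rw [Equiv.Perm.cycleType_def]
    rw [Multiset.card_map]
    apply Finset.card_image_of_injOn
    intro f hf g hg h
    have hfc : f.IsCycle := (Equiv.Perm.mem_cycleFactorsFinset_iff.mp (by simpa using hf)).1
    obtain ⟨y, hy⟩ := hfc.nonempty_support
    have h1 : f = π.cycleOf y := Equiv.Perm.cycle_is_cycleOf hy (by simpa using hf)
    have h2 : g = π.cycleOf y := Equiv.Perm.cycle_is_cycleOf (h ▸ hy) (by simpa using hg)
    rw [h1, h2]
  rw [hc1, hc2, add_comm]

end Classes



lemma sum_occ_card (hsl : IsStarList l) :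
    ∑ x : Fin n, (occ l x).card = l.length := by
  have h := Finset.card_eq_sum_card_fiberwise
    (f := letter l) (s := Finset.range l.length) (t := Finset.univ)
    (fun x _ => Finset.mem_univ _)
  rw [Finset.card_range] at h
  simp only [occ]
  exact h.symm

lemma key_repeat (hsl : IsStarList l) (htr : IsTransitiveList l)
    {D : Finset (Fin n)} (hD : D ∈ CLS l.prod) (h0 : 0 ∉ D) :
    ∃ x ∈ D, 2 ≤ (occ l x).card := by
  by_contra hcon
  push_neg at hcon
  obtain ⟨y, _, rfl⟩ := Finset.mem_image.mp hD
  have hne : (cls l.prod y).Nonempty := ⟨y, self_mem_cls⟩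
  set f : Fin n → ℕ := fun x => if h : (occ l x).Nonempty then (occ l x).min' h else 0 with hf
  obtain ⟨x, hx, hxmin⟩ := Finset.exists_min_image (cls l.prod y) f hne
  have hx0 : x ≠ 0 := fun h => h0 (h ▸ hx)
  have hπx : l.prod x ∈ cls l.prod y := apply_mem_cls hx
  have hπx0 : l.prod x ≠ 0 := fun h => h0 (h ▸ hπx)
  have hocc : (occ l x).Nonempty := occ_nonempty hsl htr hx0
  obtain ⟨k', hk'm, hk'lt⟩ := fact3 hsl hx0 hπx0 hocc
  have hcard : (occ l x).card = 1 := by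
    have := hcon x hx
    have h1 : 1 ≤ (occ l x).card := Finset.card_pos.mpr hocc
    omega
  obtain ⟨kk, hkk⟩ := Finset.card_eq_one.mp hcard
  have hmaxm : (occ l x).max' hocc ∈ ({kk} : Finset ℕ) := by
    rw [← hkk]; exact (occ l x).max'_mem hocc
  have hminm : (occ l x).min' hocc ∈ ({kk} : Finset ℕ) := by
    rw [← hkk]; exact (occ l x).min'_mem hocc
  have hmax : (occ l x).max' hocc = f x := by
    have hfx : f x = (occ l x).min' hocc := dif_pos hocc
    rw [hfx, Finset.mem_singleton.mp hmaxm, Finset.mem_singleton.mp hminm]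
  have h1 : f (l.prod x) ≤ k' := by
    have hne2 : (occ l (l.prod x)).Nonempty := ⟨k', hk'm⟩
    rw [hf]; simp only [hne2, dif_pos]
    exact Finset.min'_le _ _ hk'm
  have h2 := hxmin (l.prod x) hπx
  omega

lemma sum_lb_free (hsl : IsStarList l) (htr : IsTransitiveList l)
    {D : Finset (Fin n)} (hD : D ∈ CLS l.prod) (h0 : 0 ∉ D) :
    D.card + 1 ≤ ∑ x ∈ D, (occ l x).card := by
  obtain ⟨x₀, hx₀, hx₀2⟩ := key_repeat hsl htr hD h0
  rw [← Finset.add_sum_erase D _ hx₀]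
  have hrest : (D.erase x₀).card ≤ ∑ x ∈ D.erase x₀, (occ l x).card := by
    rw [Finset.card_eq_sum_ones]
    apply Finset.sum_le_sum
    intro y hy
    have hy0 : y ≠ 0 := fun h => h0 (h ▸ (Finset.mem_of_mem_erase hy))
    exact Finset.card_pos.mpr (occ_nonempty hsl htr hy0)
  have hce : (D.erase x₀).card = D.card - 1 := Finset.card_erase_of_mem hx₀
  have hd1 : 1 ≤ D.card := Finset.card_pos.mpr ⟨x₀, hx₀⟩
  omega

lemma sum_lb_zero (hsl : IsStarList l) (htr : IsTransitiveList l) :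
    (cls l.prod 0).card ≤ (∑ x ∈ cls l.prod 0, (occ l x).card) + 1 := by
  set D₀ := cls l.prod 0 with hD₀
  have h0 : (0 : Fin n) ∈ D₀ := self_mem_cls
  have hrest : (D₀.erase 0).card ≤ ∑ x ∈ D₀.erase 0, (occ l x).card := by
    rw [Finset.card_eq_sum_ones]
    apply Finset.sum_le_sum
    intro y hy
    exact Finset.card_pos.mpr (occ_nonempty hsl htr (Finset.ne_of_mem_erase hy))
  have hsplit : (occ l (0:Fin n)).card + ∑ x ∈ D₀.erase 0, (occ l x).card
      = ∑ x ∈ D₀, (occ l x).card := Finset.add_sum_erase _ (fun x => (occ l x).card) h0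
  have hce : (D₀.erase 0).card = D₀.card - 1 := Finset.card_erase_of_mem h0
  have hd1 : 1 ≤ D₀.card := Finset.card_pos.mpr ⟨0, h0⟩
  omega

lemma cycle_sum_eq (hsl : IsStarList l) (htr : IsTransitiveList l)
    (hlen : l.length = n + numCycles l.prod - 2)
    {D : Finset (Fin n)} (hD : D ∈ CLS l.prod) (h0 : 0 ∉ D) :
    ∑ x ∈ D, (occ l x).card = D.card + 1 := by
  classical
  set π := l.prod with hπ
  set D₀ := cls π 0 with hD₀def
  have hD₀ : D₀ ∈ CLS π := cls_mem_CLS 0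
  have h0D₀ : (0 : Fin n) ∈ D₀ := self_mem_cls
  have hDne : D ≠ D₀ := fun h => h0 (h ▸ h0D₀)
  have hD' : D ∈ (CLS π).erase D₀ := Finset.mem_erase.mpr ⟨hDne, hD⟩
  -- global sums
  have hsum2 : ∑ E ∈ CLS π, ∑ x ∈ E, (occ l x).card = l.length := by
    rw [← sum_occ_card hsl (l := l)]
    rw [← Finset.sum_fiberwise_of_maps_to (g := cls π) (t := CLS π)
      (fun x _ => cls_mem_CLS x) (fun x => (occ l x).card)]
    apply Finset.sum_congr rfl
    intro E hE
    rw [filter_cls_eq hE]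
  have hcards : ∑ E ∈ CLS π, E.card = n := by
    have h := Finset.card_eq_sum_card_fiberwise
      (f := cls π) (s := (Finset.univ : Finset (Fin n))) (t := CLS π)
      (fun x _ => cls_mem_CLS x)
    rw [Finset.card_univ, Fintype.card_fin] at h
    have h2 : ∑ E ∈ CLS π, E.card
        = ∑ E ∈ CLS π, (Finset.univ.filter (fun a => cls π a = E)).card :=
      Finset.sum_congr rfl (fun E hE => by rw [filter_cls_eq hE])
    rw [h2]
    exact h.symm
  set EE := ((CLS π).erase D₀).erase D with hEE
  -- decompositions
  have t1 : ∑ E ∈ CLS π, ∑ x ∈ E, (occ l x).card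
      = (∑ x ∈ D₀, (occ l x).card) + ∑ E ∈ (CLS π).erase D₀, ∑ x ∈ E, (occ l x).card :=
    (Finset.add_sum_erase _ _ hD₀).symm
  have t2 : ∑ E ∈ (CLS π).erase D₀, ∑ x ∈ E, (occ l x).card
      = (∑ x ∈ D, (occ l x).card) + ∑ E ∈ EE, ∑ x ∈ E, (occ l x).card :=
    (Finset.add_sum_erase _ _ hD').symm
  have t3 : ∑ E ∈ CLS π, E.card = D₀.card + ∑ E ∈ (CLS π).erase D₀, E.card :=
    (Finset.add_sum_erase _ _ hD₀).symm
  have t4 : ∑ E ∈ (CLS π).erase D₀, E.card = D.card + ∑ E ∈ EE, E.card :=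
    (Finset.add_sum_erase _ _ hD').symm
  -- lower bound on EE
  have hEEfree : ∀ E ∈ EE, E.card + 1 ≤ ∑ x ∈ E, (occ l x).card := by
    intro E hE
    have hE1 : E ∈ CLS π := Finset.mem_of_mem_erase (Finset.mem_of_mem_erase hE)
    have hE0 : (0 : Fin n) ∉ E := by
      intro h0E
      have : E = cls π 0 := eq_cls_of_mem hE1 h0E
      exact (Finset.mem_erase.mp (Finset.mem_of_mem_erase hE)).1 (this.trans hD₀def.symm)
    exact sum_lb_free hsl htr hE1 hE0
  have hEEsum : ∑ E ∈ EE, E.card + EE.card ≤ ∑ E ∈ EE, ∑ x ∈ E, (occ l x).card := by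
    calc ∑ E ∈ EE, E.card + EE.card = ∑ E ∈ EE, (E.card + 1) := by
          rw [Finset.sum_add_distrib, Finset.sum_const, smul_eq_mul, mul_one]
      _ ≤ _ := Finset.sum_le_sum hEEfree
  have hEEcard : EE.card = ((CLS π).erase D₀).card - 1 := Finset.card_erase_of_mem hD'
  have hcard1 : ((CLS π).erase D₀).card = (CLS π).card - 1 := Finset.card_erase_of_mem hD₀
  have hpos1 : 1 ≤ (CLS π).card := Finset.card_pos.mpr ⟨D₀, hD₀⟩
  have hpos2 : 1 ≤ ((CLS π).erase D₀).card := Finset.card_pos.mpr ⟨D, hD'⟩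
  have hzero : D₀.card ≤ (∑ x ∈ D₀, (occ l x).card) + 1 := sum_lb_zero hsl htr
  have hfree : D.card + 1 ≤ ∑ x ∈ D, (occ l x).card := sum_lb_free hsl htr hD h0
  have hm : (CLS π).card = numCycles π := card_CLS
  rw [hm] at hcard1 hpos1
  omega

lemma unique_two (hsl : IsStarList l) (htr : IsTransitiveList l)
    (hlen : l.length = n + numCycles l.prod - 2)
    {D : Finset (Fin n)} (hD : D ∈ CLS l.prod) (h0 : 0 ∉ D) :
    ∃ x₀ ∈ D, (occ l x₀).card = 2 ∧ ∀ y ∈ D, y ≠ x₀ → (occ l y).card = 1 := by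
  obtain ⟨x₀, hx₀, hx₀2⟩ := key_repeat hsl htr hD h0
  have hsum := cycle_sum_eq hsl htr hlen hD h0
  have hsplit : (occ l x₀).card + ∑ x ∈ D.erase x₀, (occ l x).card
      = ∑ x ∈ D, (occ l x).card := Finset.add_sum_erase _ (fun x => (occ l x).card) hx₀
  have hone : ∀ y ∈ D.erase x₀, 1 ≤ (occ l y).card := by
    intro y hy
    exact Finset.card_pos.mpr (occ_nonempty hsl htr
      (fun h => h0 (h ▸ (Finset.mem_of_mem_erase hy))))
  have hrest : (D.erase x₀).card ≤ ∑ x ∈ D.erase x₀, (occ l x).card := by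
    rw [Finset.card_eq_sum_ones]; exact Finset.sum_le_sum hone
  have hce : (D.erase x₀).card = D.card - 1 := Finset.card_erase_of_mem hx₀
  have hd1 : 1 ≤ D.card := Finset.card_pos.mpr ⟨x₀, hx₀⟩
  have hx₀eq : (occ l x₀).card = 2 := by omega
  refine ⟨x₀, hx₀, hx₀eq, ?_⟩
  have hsumrest : ∑ x ∈ D.erase x₀, (occ l x).card = (D.erase x₀).card := by omega
  have := (Finset.sum_eq_sum_iff_of_le hone).mp ?_
  · intro y hyD hyne
    exact ((this y) (Finset.mem_erase.mpr ⟨hyne, hyD⟩)).symm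
  · rw [hsumrest, Finset.card_eq_sum_ones]



lemma swap_zero_inj {x y : Fin n} (h : Equiv.swap 0 x = Equiv.swap 0 y) : x = y := by
  have := congrArg (fun σ : Equiv.Perm (Fin n) => σ 0) h
  simpa [Equiv.swap_apply_left] using this

lemma get_eq_swap {k : Fin l.length} (hsl : IsStarList l) :
    l.get k = Equiv.swap 0 (letter l k.val) := by
  rw [← List.getD_eq_get l 1 k]
  exact (get_eq_swap_letter hsl k.isLt).1

end Stmt7


open Stmt7 Finset in
/-- Lemma 1(1): a cycle `(a₁ a₂ ⋯ a_ℓ)` of `π` avoiding the symbol 1 (encoded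
as `0 : Fin n`); `a` is a `ℓ`-periodic enumeration of the cycle. Some `(1 aⱼ)`
appears exactly twice, all others exactly once, and the factors meeting the
cycle occur in right-to-left order `(1 aⱼ), (1 a_{j+1}), …, (1 a_{j+ℓ-1}), (1 aⱼ)`. -/
theorem stmt7 {n : ℕ} [NeZero n] (π : Equiv.Perm (Fin n))
    (l : List (Equiv.Perm (Fin n)))
    (hl : IsMinimalTransitiveStarFactorization π l)
    (ℓ : ℕ) (hℓ : 1 ≤ ℓ) (a : ℕ → Fin n)
    (ha0 : ∀ i, a i ≠ 0)
    (hper : ∀ i, a (i + ℓ) = a i)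
    (hinj : ∀ i j, i < ℓ → j < ℓ → a i = a j → i = j)
    (hcyc : ∀ i, π (a i) = a (i + 1))
    (horb : ∀ x : Fin n, π.SameCycle (a 0) x ↔ ∃ i < ℓ, x = a i) :
    ∃ j < ℓ,
      l.count (Equiv.swap 0 (a j)) = 2 ∧
      (∀ i < ℓ, i ≠ j → l.count (Equiv.swap 0 (a i)) = 1) ∧
      ∃ p q : Fin l.length, p < q ∧
        l.get p = Equiv.swap 0 (a j) ∧ l.get q = Equiv.swap 0 (a j) ∧
        (∀ s : ℕ, 1 ≤ s → s < ℓ → ∀ r : Fin l.length,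
          l.get r = Equiv.swap 0 (a (j + s)) → p < r ∧ r < q) ∧
        (∀ s t : ℕ, 1 ≤ s → s < t → t < ℓ → ∀ r u : Fin l.length,
          l.get r = Equiv.swap 0 (a (j + s)) →
          l.get u = Equiv.swap 0 (a (j + t)) → u < r) := by
  obtain ⟨⟨hsl, hprod⟩, htr, hlen⟩ := hl
  subst hprod
  -- periodicity mod ℓ
  have amod : ∀ i, a i = a (i % ℓ) := by
    intro i
    induction i using Nat.strong_induction_on with
    | _ i ih =>
      by_cases h : i < ℓ
      · rw [Nat.mod_eq_of_lt h]
      · push_neg at h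
        have h1 : a i = a (i - ℓ) := by
          conv_lhs => rw [show i = (i - ℓ) + ℓ by omega]
          exact hper (i - ℓ)
        rw [h1, ih (i - ℓ) (by omega), Nat.mod_eq_sub_mod h]
  -- the cycle as a class
  have hCaeq : cls l.prod (a 0) = (Finset.range ℓ).image a := by
    ext x
    rw [mem_cls, horb, Finset.mem_image]
    constructor
    · rintro ⟨i, hi, rfl⟩; exact ⟨i, Finset.mem_range.mpr hi, rfl⟩
    · rintro ⟨i, hi, rfl⟩; exact ⟨i, Finset.mem_range.mp hi, rfl⟩
  have hCaC : cls l.prod (a 0) ∈ CLS l.prod := cls_mem_CLS _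
  have h0Ca : (0 : Fin n) ∉ cls l.prod (a 0) := by
    rw [hCaeq]
    intro h
    obtain ⟨i, _, hi⟩ := Finset.mem_image.mp h
    exact ha0 i hi
  have hmemCa : ∀ i, a i ∈ cls l.prod (a 0) := by
    intro i
    rw [hCaeq]
    exact Finset.mem_image.mpr ⟨i % ℓ, Finset.mem_range.mpr (Nat.mod_lt i (by omega)), (amod i).symm⟩
  obtain ⟨x₀, hx₀mem, hx₀2, hx₀rest⟩ := unique_two hsl htr hlen hCaC h0Ca
  obtain ⟨j, hjr, hja⟩ := Finset.mem_image.mp (hCaeq ▸ hx₀mem)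
  have hjℓ : j < ℓ := Finset.mem_range.mp hjr
  refine ⟨j, hjℓ, ?_, ?_, ?_⟩
  · rw [count_eq_occ_card hsl (ha0 j), hja, hx₀2]
  · intro i hiℓ hij
    rw [count_eq_occ_card hsl (ha0 i)]
    apply hx₀rest (a i) (hmemCa i)
    intro h
    exact hij (hinj i j hiℓ hjℓ (h.trans hja.symm))
  -- structure of occurrences
  · have hdiff : ∀ s, 1 ≤ s → s < ℓ → a (j + s) ≠ x₀ := by
      intro s h1 h2 hcon
      have hmod : (j + s) % ℓ < ℓ := Nat.mod_lt _ (by omega)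
      have heq : a ((j + s) % ℓ) = a j := by rw [← amod, hcon, hja]
      have hji := hinj _ _ hmod hjℓ heq
      rcases Nat.lt_or_ge (j + s) ℓ with h | h
      · rw [Nat.mod_eq_of_lt h] at hji; omega
      · rw [Nat.mod_eq_sub_mod h, Nat.mod_eq_of_lt (by omega)] at hji; omega
    have hocc1 : ∀ s, 1 ≤ s → s < ℓ → (occ l (a (j + s))).card = 1 := by
      intro s h1 h2
      exact hx₀rest _ (hmemCa _) (hdiff s h1 h2)
    have hneall : ∀ i : ℕ, (occ l (a i)).Nonempty :=
      fun i => occ_nonempty hsl htr (ha0 i)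
    have hx₀occ : (occ l (a j)).card = 2 := by rw [hja]; exact hx₀2
    obtain ⟨p₁, q₁, hpqne, hset₁⟩ := Finset.card_eq_two.mp hx₀occ
    -- the rest, with sorted pair
    have key : ∀ p₀ q₀ : ℕ, p₀ < q₀ → occ l (a j) = {p₀, q₀} →
        ∃ p q : Fin l.length, p < q ∧
        l.get p = Equiv.swap 0 (a j) ∧ l.get q = Equiv.swap 0 (a j) ∧
        (∀ s : ℕ, 1 ≤ s → s < ℓ → ∀ r : Fin l.length,
          l.get r = Equiv.swap 0 (a (j + s)) → p < r ∧ r < q) ∧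
        (∀ s t : ℕ, 1 ≤ s → s < t → t < ℓ → ∀ r u : Fin l.length,
          l.get r = Equiv.swap 0 (a (j + s)) →
          l.get u = Equiv.swap 0 (a (j + t)) → u < r) := by
      intro p₀ q₀ hplt hset
      have hp₀mem : p₀ ∈ occ l (a j) := by rw [hset]; simp
      have hq₀mem : q₀ ∈ occ l (a j) := by rw [hset]; simp
      set g : ℕ → ℕ := fun s => (occ l (a (j + s))).min' (hneall (j + s)) with hg
      have hmaxj : (occ l (a j)).max' (hneall j) = q₀ := by
        apply le_antisymm
        · apply Finset.max'_le
          intro y hy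
          rw [hset] at hy
          rcases Finset.mem_insert.mp hy with h | h
          · omega
          · rw [Finset.mem_singleton.mp h]
        · exact Finset.le_max' _ _ hq₀mem
      have hsing : ∀ s, 1 ≤ s → s < ℓ → occ l (a (j + s)) = {g s} := by
        intro s h1 h2
        obtain ⟨k, hk⟩ := Finset.card_eq_one.mp (hocc1 s h1 h2)
        have hmem : g s ∈ ({k} : Finset ℕ) := by
          rw [← hk]; exact (occ l (a (j + s))).min'_mem _
        rw [hk, Finset.mem_singleton.mp hmem]
      have hmaxs : ∀ s, 1 ≤ s → s < ℓ →
          (occ l (a (j + s))).max' (hneall (j + s)) = g s := by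
        intro s h1 h2
        have hmem : (occ l (a (j + s))).max' (hneall (j + s)) ∈ ({g s} : Finset ℕ) := by
          rw [← hsing s h1 h2]; exact (occ l (a (j + s))).max'_mem _
        exact Finset.mem_singleton.mp hmem
      have FS : ∀ s : ℕ, ∃ k' ∈ occ l (a (j + s + 1)),
          k' < (occ l (a (j + s))).max' (hneall (j + s)) := by
        intro s
        have hπ : l.prod (a (j + s)) = a (j + s + 1) := hcyc (j + s)
        have h := fact3 hsl (ha0 (j + s)) (by rw [hπ]; exact ha0 _) (hneall (j + s))
        rw [hπ] at h
        exact h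
      -- one step of the chain
      have gstep : ∀ s, 1 ≤ s → s + 1 < ℓ → g (s + 1) < g s := by
        intro s h1 h2
        obtain ⟨k', hk'm, hk'l⟩ := FS s
        have hk'm' : k' ∈ occ l (a (j + (s + 1))) := hk'm
        rw [hsing (s + 1) (by omega) h2] at hk'm'
        rw [hmaxs s h1 (by omega)] at hk'l
        rw [Finset.mem_singleton.mp hk'm'] at hk'l
        exact hk'l
      have g1 : 1 < ℓ → g 1 < q₀ := by
        intro h2
        obtain ⟨k', hk'm, hk'l⟩ := FS 0
        have hk'm' : k' ∈ occ l (a (j + 1)) := hk'm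
        rw [hsing 1 le_rfl h2] at hk'm'
        have hq : (occ l (a (j + 0))).max' (hneall (j + 0)) = q₀ := hmaxj
        rw [hq] at hk'l
        rw [Finset.mem_singleton.mp hk'm'] at hk'l
        exact hk'l
      have gq : ∀ s, 1 ≤ s → s < ℓ → g s < q₀ := by
        intro s
        induction s using Nat.strong_induction_on with
        | _ s ih =>
          intro h1 h2
          rcases Nat.eq_or_lt_of_le h1 with h | h
          · rw [← h]; exact g1 (by omega)
          · have hs' : s - 1 + 1 = s := by omega
            have hst : g s < g (s - 1) := by
              rw [← hs']; exact gstep (s - 1) (by omega) (by omega)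
            have := ih (s - 1) (by omega) (by omega) (by omega)
            omega
      have gmon : ∀ s t, 1 ≤ s → s < t → t < ℓ → g t < g s := by
        intro s t hs hst htℓ
        induction t using Nat.strong_induction_on with
        | _ t ih =>
          rcases Nat.eq_or_lt_of_le hst with h | h
          · rw [← h]; exact gstep s hs (by omega)
          · have ht' : t - 1 + 1 = t := by omega
            have h1 : g t < g (t - 1) := by
              rw [← ht']; exact gstep (t - 1) (by omega) (by omega)
            have h2 := ih (t - 1) (by omega) (by omega) (by omega)
            omega
      have pb : ∀ s, 1 ≤ s → s < ℓ → p₀ < g s := by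
        intro s h1 h2
        have hℓ2 : 2 ≤ ℓ := by omega
        have hlast : p₀ < g (ℓ - 1) := by
          obtain ⟨k', hk'm, hk'l⟩ := FS (ℓ - 1)
          have harew : a (j + (ℓ - 1) + 1) = a j := by
            rw [show j + (ℓ - 1) + 1 = j + ℓ by omega]
            exact hper j
          rw [harew, hset] at hk'm
          rw [hmaxs (ℓ - 1) (by omega) (by omega)] at hk'l
          rcases Finset.mem_insert.mp hk'm with h | h
          · rw [← h]; exact hk'l
          · rw [Finset.mem_singleton.mp h] at hk'l
            have := gq (ℓ - 1) (by omega) (by omega)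
            omega
        rcases Nat.eq_or_lt_of_le (show s ≤ ℓ - 1 by omega) with h | h
        · rw [h]; exact hlast
        · have := gmon s (ℓ - 1) h1 (by omega) (by omega)
          omega
      -- build the Fin indices
      obtain ⟨hp₀len, hp₀let⟩ := mem_occ.mp hp₀mem
      obtain ⟨hq₀len, hq₀let⟩ := mem_occ.mp hq₀mem
      refine ⟨⟨p₀, hp₀len⟩, ⟨q₀, hq₀len⟩, hplt, ?_, ?_, ?_, ?_⟩
      · rw [get_eq_swap hsl, hp₀let]
      · rw [get_eq_swap hsl, hq₀let]
      · intro s hs1 hsℓ r hr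
        have hlet : letter l r.val = a (j + s) :=
          swap_zero_inj ((get_eq_swap hsl (k := r)).symm.trans hr)
        have hrmem : r.val ∈ occ l (a (j + s)) := mem_occ.mpr ⟨r.isLt, hlet⟩
        rw [hsing s hs1 hsℓ] at hrmem
        have hrg : r.val = g s := Finset.mem_singleton.mp hrmem
        constructor
        · show (⟨p₀, hp₀len⟩ : Fin l.length) < r
          rw [Fin.lt_def]
          show p₀ < r.val
          rw [hrg]; exact pb s hs1 hsℓ
        · show r < (⟨q₀, hq₀len⟩ : Fin l.length)
          rw [Fin.lt_def]
          show r.val < q₀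
          rw [hrg]; exact gq s hs1 hsℓ
      · intro s t hs1 hst htℓ r u hr hu
        have hletr : letter l r.val = a (j + s) :=
          swap_zero_inj ((get_eq_swap hsl (k := r)).symm.trans hr)
        have hletu : letter l u.val = a (j + t) :=
          swap_zero_inj ((get_eq_swap hsl (k := u)).symm.trans hu)
        have hrmem : r.val ∈ occ l (a (j + s)) := mem_occ.mpr ⟨r.isLt, hletr⟩
        have humem : u.val ∈ occ l (a (j + t)) := mem_occ.mpr ⟨u.isLt, hletu⟩
        rw [hsing s hs1 (by omega)] at hrmem
        rw [hsing t (by omega) htℓ] at humem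
        rw [Fin.lt_def]
        rw [Finset.mem_singleton.mp hrmem, Finset.mem_singleton.mp humem]
        exact gmon s t hs1 hst htℓ
    rcases Nat.lt_or_ge p₁ q₁ with h | h
    · exact key p₁ q₁ h hset₁
    · refine key q₁ p₁ (by omega) ?_
      rw [hset₁, Finset.pair_comm]
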